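/- Let 0 < max(r₁,r₃) < r₂ and set λ̄ = min(-max(r₁,r₃), π²/L² - r₂) for a given L > 0. The function G(λ) = cot(L√(r₂+λ)) - (r₂+λ - √((r₁+λ)(r₃+λ)))/(√(r₂+λ)(√(-r₁-λ) + √(-r₃-λ))) is strictly decreasing on (-r₂, λ̄) and tends to +∞ as λ → -r₂⁺. -/

import Mathlib

open Real Set Filter Topology

/-- cot is strictly decreasing on (0, π). -/
lemma cot_lt_cot_aux {x y : ℝ} (hx : 0 < x) (hy : y < Real.pi) (hxy : x < y) :
    Real.cot y < Real.cot x := by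
  have hsx : 0 < Real.sin x := Real.sin_pos_of_pos_of_lt_pi hx (hxy.trans hy)
  have hsy : 0 < Real.sin y := Real.sin_pos_of_pos_of_lt_pi (hx.trans hxy) hy
  have hsyx : 0 < Real.sin (y - x) :=
    Real.sin_pos_of_pos_of_lt_pi (by linarith) (by linarith)
  rw [← sub_pos, Real.cot_eq_cos_div_sin, Real.cot_eq_cos_div_sin,
    div_sub_div _ _ hsx.ne' hsy.ne']
  apply div_pos _ (mul_pos hsx hsy)
  have h : Real.sin (y - x) = Real.cos x * Real.sin y - Real.sin x * Real.cos y := by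
    rw [Real.sin_sub]; ring
  linarith [h ▸ hsyx]

/-- Monotonicity of the second term of G. -/
lemma H_lt_H_aux {a₁ b₁ c₁ a₂ b₂ c₂ : ℝ} (ha₂ : 0 < a₂) (hb₂ : 0 < b₂) (hc₁ : 0 < c₁)
    (ha : a₂ < a₁) (hb : b₂ < b₁) (hc : c₁ < c₂) :
    (c₁ - Real.sqrt a₁ * Real.sqrt b₁) / (Real.sqrt c₁ * (Real.sqrt a₁ + Real.sqrt b₁)) <
    (c₂ - Real.sqrt a₂ * Real.sqrt b₂) / (Real.sqrt c₂ * (Real.sqrt a₂ + Real.sqrt b₂)) := by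
  have ha₁ : 0 < a₁ := ha₂.trans ha
  have hb₁ : 0 < b₁ := hb₂.trans hb
  have hc₂ : 0 < c₂ := hc₁.trans hc
  have hsa1 : 0 < Real.sqrt a₁ := Real.sqrt_pos.2 ha₁
  have hsa2 : 0 < Real.sqrt a₂ := Real.sqrt_pos.2 ha₂
  have hsb1 : 0 < Real.sqrt b₁ := Real.sqrt_pos.2 hb₁
  have hsb2 : 0 < Real.sqrt b₂ := Real.sqrt_pos.2 hb₂
  have hsc1 : 0 < Real.sqrt c₁ := Real.sqrt_pos.2 hc₁
  have hsc2 : 0 < Real.sqrt c₂ := Real.sqrt_pos.2 hc₂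
  have hsa : Real.sqrt a₂ < Real.sqrt a₁ := Real.sqrt_lt_sqrt ha₂.le ha
  have hsb : Real.sqrt b₂ < Real.sqrt b₁ := Real.sqrt_lt_sqrt hb₂.le hb
  have hsc : Real.sqrt c₁ < Real.sqrt c₂ := Real.sqrt_lt_sqrt hc₁.le hc
  set sa1 := Real.sqrt a₁
  set sa2 := Real.sqrt a₂
  set sb1 := Real.sqrt b₁
  set sb2 := Real.sqrt b₂
  set sc1 := Real.sqrt c₁
  set sc2 := Real.sqrt c₂
  have id₁ : (c₁ - sa1 * sb1) / (sc1 * (sa1 + sb1)) =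
      sc1 / (sa1 + sb1) - sa1 * sb1 / (sc1 * (sa1 + sb1)) := by
    rw [sub_div]
    congr 1
    rw [← Real.mul_self_sqrt hc₁.le]
    exact mul_div_mul_left _ _ hsc1.ne'
  have id₂ : (c₂ - sa2 * sb2) / (sc2 * (sa2 + sb2)) =
      sc2 / (sa2 + sb2) - sa2 * sb2 / (sc2 * (sa2 + sb2)) := by
    rw [sub_div]
    congr 1
    rw [← Real.mul_self_sqrt hc₂.le]
    exact mul_div_mul_left _ _ hsc2.ne'
  rw [id₁, id₂]
  have hd1 : 0 < sa1 + sb1 := by linarith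
  have hd2 : 0 < sa2 + sb2 := by linarith
  have t1 : sc1 / (sa1 + sb1) < sc2 / (sa2 + sb2) := by
    rw [div_lt_div_iff₀ hd1 hd2]
    exact mul_lt_mul'' hsc (add_lt_add hsa hsb) hsc1.le hd2.le
  have t2 : sa2 * sb2 / (sc2 * (sa2 + sb2)) < sa1 * sb1 / (sc1 * (sa1 + sb1)) := by
    rw [div_lt_div_iff₀ (mul_pos hsc2 hd2) (mul_pos hsc1 hd1)]
    have e : sa2 * sb2 * (sc1 * (sa1 + sb1)) =
        (sa1 * sa2) * (sb2 * sc1) + (sb1 * sb2) * (sa2 * sc1) := by ring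
    have e' : sa1 * sb1 * (sc2 * (sa2 + sb2)) =
        (sa1 * sa2) * (sb1 * sc2) + (sb1 * sb2) * (sa1 * sc2) := by ring
    rw [e, e']
    exact add_lt_add
      (mul_lt_mul_of_pos_left (mul_lt_mul'' hsb hsc hsb2.le hsc1.le) (mul_pos hsa1 hsa2))
      (mul_lt_mul_of_pos_left (mul_lt_mul'' hsa hsc hsa2.le hsc1.le) (mul_pos hsb1 hsb2))
  exact sub_lt_sub t1 t2

theorem G_strictAnti_tendsto (r₁ r₂ r₃ L : ℝ) (h1 : 0 < r₁) (h3 : 0 < r₃)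
    (h2 : max r₁ r₃ < r₂) (hL : 0 < L)
    (lamBar : ℝ) (hlamBar : lamBar = min (-(max r₁ r₃)) (Real.pi ^ 2 / L ^ 2 - r₂))
    (G : ℝ → ℝ)
    (hG : ∀ lam, G lam = Real.cot (L * Real.sqrt (r₂ + lam))
        - (r₂ + lam - Real.sqrt ((r₁ + lam) * (r₃ + lam)))
          / (Real.sqrt (r₂ + lam) * (Real.sqrt (-r₁ - lam) + Real.sqrt (-r₃ - lam)))) :
    StrictAntiOn G (Set.Ioo (-r₂) lamBar) ∧
      Filter.Tendsto G (nhdsWithin (-r₂) (Set.Ioi (-r₂))) Filter.atTop := by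
  have hr1 : r₁ < r₂ := lt_of_le_of_lt (le_max_left _ _) h2
  have hr3 : r₃ < r₂ := lt_of_le_of_lt (le_max_right _ _) h2
  have hbar1 : lamBar ≤ -(max r₁ r₃) := hlamBar ▸ min_le_left _ _
  have hbar2 : lamBar ≤ Real.pi ^ 2 / L ^ 2 - r₂ := hlamBar ▸ min_le_right _ _
  have hbarr1 : lamBar ≤ -r₁ := hbar1.trans (by simp [le_max_left])
  have hbarr3 : lamBar ≤ -r₃ := hbar1.trans (by simp [le_max_right])
  constructor
  · -- Strict antitonicity
    intro x hx y hy hxy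
    obtain ⟨hx1, hx2⟩ := hx
    obtain ⟨hy1, hy2⟩ := hy
    have hcx : 0 < r₂ + x := by linarith
    have hcy : 0 < r₂ + y := by linarith
    have hay : 0 < -r₁ - y := by linarith [hy2.trans_le hbarr1]
    have hby : 0 < -r₃ - y := by linarith [hy2.trans_le hbarr3]
    have hax : 0 < -r₁ - x := by linarith
    have hbx : 0 < -r₃ - x := by linarith
    rw [hG x, hG y]
    have ex : (r₁ + x) * (r₃ + x) = (-r₁ - x) * (-r₃ - x) := by ring
    have ey : (r₁ + y) * (r₃ + y) = (-r₁ - y) * (-r₃ - y) := by ring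
    rw [ex, ey, Real.sqrt_mul hax.le, Real.sqrt_mul hay.le]
    refine sub_lt_sub ?_ ?_
    · -- cot part
      have hπL : 0 < Real.pi / L := div_pos Real.pi_pos hL
      have hyπ : L * Real.sqrt (r₂ + y) < Real.pi := by
        have h' : Real.sqrt (r₂ + y) < Real.pi / L := by
          rw [Real.sqrt_lt' hπL, div_pow]
          have := hy2.trans_le hbar2
          linarith
        calc L * Real.sqrt (r₂ + y) < L * (Real.pi / L) :=
              mul_lt_mul_of_pos_left h' hL
          _ = Real.pi := by field_simp
      exact cot_lt_cot_aux (mul_pos hL (Real.sqrt_pos.2 hcx)) hyπ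
        (mul_lt_mul_of_pos_left (Real.sqrt_lt_sqrt hcx.le (by linarith)) hL)
    · -- H part
      exact H_lt_H_aux hay hby hcx (by linarith) (by linarith) (by linarith)
  · -- Tendsto atTop
    have hu : Tendsto (fun lam => L * Real.sqrt (r₂ + lam)) (𝓝[>] (-r₂)) (𝓝[>] 0) := by
      rw [tendsto_nhdsWithin_iff]
      constructor
      · have hcont : Continuous fun lam : ℝ => L * Real.sqrt (r₂ + lam) := by
          fun_prop
        have h0 : Tendsto (fun lam => L * Real.sqrt (r₂ + lam)) (𝓝[>] (-r₂))
            (𝓝 (L * Real.sqrt (r₂ + -r₂))) :=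
          (hcont.tendsto (-r₂)).mono_left nhdsWithin_le_nhds
        simpa using h0
      · filter_upwards [self_mem_nhdsWithin] with lam hlam
        have hp : 0 < r₂ + lam := by
          have := Set.mem_Ioi.1 hlam; linarith
        exact mul_pos hL (Real.sqrt_pos.2 hp)
    have hcot : Tendsto Real.cot (𝓝[>] (0 : ℝ)) atTop := by
      have hsin : Tendsto Real.sin (𝓝[>] (0 : ℝ)) (𝓝[>] 0) := by
        rw [tendsto_nhdsWithin_iff]
        constructor
        · simpa using (Real.continuous_sin.tendsto 0).mono_left nhdsWithin_le_nhds
        · filter_upwards [Ioo_mem_nhdsGT_of_mem (Set.left_mem_Ico.2 Real.pi_pos)]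
            with s hs
          exact Real.sin_pos_of_pos_of_lt_pi hs.1 hs.2
      have hinv : Tendsto (fun s => (Real.sin s)⁻¹) (𝓝[>] (0 : ℝ)) atTop :=
        tendsto_inv_nhdsGT_zero.comp hsin
      have hcos : Tendsto Real.cos (𝓝[>] (0 : ℝ)) (𝓝 1) := by
        simpa using (Real.continuous_cos.tendsto 0).mono_left nhdsWithin_le_nhds
      have hmain := hcos.pos_mul_atTop one_pos hinv
      refine hmain.congr fun s => ?_
      rw [Real.cot_eq_cos_div_sin, div_eq_mul_inv]
    have h1 : Tendsto (fun lam => Real.cot (L * Real.sqrt (r₂ + lam)))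
        (𝓝[>] (-r₂)) atTop := hcot.comp hu
    have hden : Tendsto
        (fun lam => Real.sqrt (r₂ + lam) * (Real.sqrt (-r₁ - lam) + Real.sqrt (-r₃ - lam)))
        (𝓝[>] (-r₂)) (𝓝[>] 0) := by
      rw [tendsto_nhdsWithin_iff]
      constructor
      · have hcont : Continuous fun lam : ℝ =>
            Real.sqrt (r₂ + lam) * (Real.sqrt (-r₁ - lam) + Real.sqrt (-r₃ - lam)) := by
          fun_prop
        simpa using (hcont.tendsto (-r₂)).mono_left nhdsWithin_le_nhds
      · filter_upwards [Ioo_mem_nhdsGT_of_mem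
          (Set.left_mem_Ico.2 (by linarith : -r₂ < -r₁))] with lam hlam
        have hp1 : 0 < r₂ + lam := by have := hlam.1; linarith
        have hp2 : 0 < -r₁ - lam := by have := hlam.2; linarith
        exact mul_pos (Real.sqrt_pos.2 hp1)
          (add_pos_of_pos_of_nonneg (Real.sqrt_pos.2 hp2) (Real.sqrt_nonneg _))
    have hdinv : Tendsto
        (fun lam => (Real.sqrt (r₂ + lam) *
          (Real.sqrt (-r₁ - lam) + Real.sqrt (-r₃ - lam)))⁻¹) (𝓝[>] (-r₂)) atTop :=
      tendsto_inv_nhdsGT_zero.comp hden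
    have hKpos : 0 < Real.sqrt ((r₁ - r₂) * (r₃ - r₂)) :=
      Real.sqrt_pos.2 (mul_pos_of_neg_of_neg (by linarith) (by linarith))
    have hnum : Tendsto (fun lam => Real.sqrt ((r₁ + lam) * (r₃ + lam)) - (r₂ + lam))
        (𝓝[>] (-r₂)) (𝓝 (Real.sqrt ((r₁ - r₂) * (r₃ - r₂)))) := by
      have hcont : Continuous fun lam : ℝ =>
          Real.sqrt ((r₁ + lam) * (r₃ + lam)) - (r₂ + lam) := by fun_prop
      have h0 : Tendsto (fun lam => Real.sqrt ((r₁ + lam) * (r₃ + lam)) - (r₂ + lam))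
          (𝓝[>] (-r₂)) (𝓝 (Real.sqrt ((r₁ + -r₂) * (r₃ + -r₂)) - (r₂ + -r₂))) :=
        (hcont.tendsto (-r₂)).mono_left nhdsWithin_le_nhds
      have hval : Real.sqrt ((r₁ + -r₂) * (r₃ + -r₂)) - (r₂ + -r₂) =
          Real.sqrt ((r₁ - r₂) * (r₃ - r₂)) := by
        rw [show (r₁ + -r₂) * (r₃ + -r₂) = (r₁ - r₂) * (r₃ - r₂) by ring]
        ring
      rwa [hval] at h0
    have h2 : Tendsto (fun lam => (Real.sqrt ((r₁ + lam) * (r₃ + lam)) - (r₂ + lam)) *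
        (Real.sqrt (r₂ + lam) * (Real.sqrt (-r₁ - lam) + Real.sqrt (-r₃ - lam)))⁻¹)
        (𝓝[>] (-r₂)) atTop := hnum.pos_mul_atTop hKpos hdinv
    have hfinal := Filter.Tendsto.atTop_add_atTop h1 h2
    refine hfinal.congr fun lam => ?_
    rw [hG lam, div_eq_mul_inv]
    ring
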